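/- Let n ≥ 1 and let S_n be the star graph on vertices {0,1,...,n-1}. A partial transformation α of {0,1,...,n-1} is a partial strong endomorphism of S_n if and only if one of the following holds: (1) 0 ∉ dom(α) and either im(α) = {0} or im(α) ⊆ {1,...,n-1}; (2) 0 ∈ dom(α), 0α = 0, and α maps dom(α) ∩ {1,...,n-1} into {1,...,n-1}; (3) 0 ∈ dom(α), 0α ≠ 0, and α maps dom(α) ∩ {1,...,n-1} into {0}. -/

import Mathlib

def pmul {V : Type*} (f g : V → Option V) : V → Option V := fun x => (f x).bind g

def pdom {V : Type*} (f : V → Option V) : Set V := {x | f x ≠ none}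

def pim {V : Type*} (f : V → Option V) : Set V := {y | ∃ x, f x = some y}

def pker {V : Type*} (f : V → Option V) : V → V → Prop := fun x y => f x ≠ none ∧ f x = f y

def PInj {V : Type*} (f : V → Option V) : Prop := ∀ u v a, f u = some a → f v = some a → u = v

def edge {n : ℕ} (u v : Fin n) : Prop := (u.val = 0 ∧ v.val ≠ 0) ∨ (v.val = 0 ∧ u.val ≠ 0)

def IsPEnd {n : ℕ} (α : Fin n → Option (Fin n)) : Prop :=
  ∀ u v a b, α u = some a → α v = some b → edge u v → edge a b

def IsPwEnd {n : ℕ} (α : Fin n → Option (Fin n)) : Prop :=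
  ∀ u v a b, α u = some a → α v = some b → edge u v → a ≠ b → edge a b

def IsPsEnd {n : ℕ} (α : Fin n → Option (Fin n)) : Prop :=
  ∀ u v a b, α u = some a → α v = some b → (edge u v ↔ edge a b)

def IsPswEnd {n : ℕ} (α : Fin n → Option (Fin n)) : Prop :=
  ∀ u v a b, α u = some a → α v = some b → ((edge u v ∧ a ≠ b) ↔ edge a b)

def PEndS (n : ℕ) : Set (Fin n → Option (Fin n)) := {α | IsPEnd α}
def PwEndS (n : ℕ) : Set (Fin n → Option (Fin n)) := {α | IsPwEnd α}
def PsEndS (n : ℕ) : Set (Fin n → Option (Fin n)) := {α | IsPsEnd α}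
def PswEndS (n : ℕ) : Set (Fin n → Option (Fin n)) := {α | IsPswEnd α}
def IEndS (n : ℕ) : Set (Fin n → Option (Fin n)) := {α | PInj α ∧ IsPEnd α}
def PAutS (n : ℕ) : Set (Fin n → Option (Fin n)) := {α | PInj α ∧ IsPsEnd α}

def RegularIn {V : Type*} (M : Set (V → Option V)) (a : V → Option V) : Prop :=
  ∃ b ∈ M, pmul (pmul a b) a = a

def GreenL {V : Type*} (M : Set (V → Option V)) (a b : V → Option V) : Prop :=
  (∃ g ∈ M, a = pmul g b) ∧ (∃ g ∈ M, b = pmul g a)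

def GreenR {V : Type*} (M : Set (V → Option V)) (a b : V → Option V) : Prop :=
  (∃ g ∈ M, a = pmul b g) ∧ (∃ g ∈ M, b = pmul a g)

def GreenH {V : Type*} (M : Set (V → Option V)) (a b : V → Option V) : Prop :=
  GreenL M a b ∧ GreenR M a b

def GreenJ {V : Type*} (M : Set (V → Option V)) (a b : V → Option V) : Prop :=
  (∃ g ∈ M, ∃ h ∈ M, a = pmul (pmul g b) h) ∧ (∃ g ∈ M, ∃ h ∈ M, b = pmul (pmul g a) h)

theorem stmt4 (n : ℕ) (hn : 1 ≤ n) (α : Fin n → Option (Fin n)) :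
    IsPsEnd α ↔
      (((⟨0, hn⟩ : Fin n) ∉ pdom α
          ∧ (pim α = {(⟨0, hn⟩ : Fin n)} ∨ pim α ⊆ {x : Fin n | x ≠ ⟨0, hn⟩}))
        ∨ (α ⟨0, hn⟩ = some ⟨0, hn⟩
            ∧ ∀ x a : Fin n, x ≠ ⟨0, hn⟩ → α x = some a → a ≠ ⟨0, hn⟩)
        ∨ (∃ b : Fin n, α ⟨0, hn⟩ = some b ∧ b ≠ ⟨0, hn⟩
            ∧ ∀ x a : Fin n, x ≠ ⟨0, hn⟩ → α x = some a → a = ⟨0, hn⟩)) := by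
  set z : Fin n := ⟨0, hn⟩ with hz
  have hzv : ∀ x : Fin n, x = z ↔ x.val = 0 := by
    intro x; constructor
    · intro h; rw [h]
    · intro h; apply Fin.ext; exact h
  constructor
  · intro hα
    rcases h0 : α z with _ | b
    · -- z not in dom
      left
      refine ⟨by simp [pdom, h0], ?_⟩
      have hdom : ∀ x a : Fin n, α x = some a → x ≠ z := by
        intro x a hx hxz; rw [hxz, h0] at hx; exact Option.some_ne_none a hx.symm
      have hnoedge : ∀ u v a b : Fin n, α u = some a → α v = some b → ¬ edge a b := by
        intro u v a b hu hv
        rw [← hα u v a b hu hv]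
        rintro (⟨h1, _⟩ | ⟨h1, _⟩)
        · exact hdom u a hu ((hzv u).2 h1)
        · exact hdom v b hv ((hzv v).2 h1)
      by_cases hex : ∃ x, α x = some z
      · left
        obtain ⟨x0, hx0⟩ := hex
        ext y; simp only [pim, Set.mem_setOf_eq, Set.mem_singleton_iff]
        constructor
        · rintro ⟨x, hx⟩
          by_contra hyz
          exact hnoedge x x0 y z hx hx0 (Or.inr ⟨rfl, fun h => hyz ((hzv y).2 h)⟩)
        · rintro rfl; exact ⟨x0, hx0⟩
      · right
        rintro y ⟨x, hx⟩ (hy : y = z)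
        exact hex ⟨x, hy ▸ hx⟩
    · by_cases hb : b = z
      · right; left
        subst hb
        refine ⟨rfl, ?_⟩
        intro x a hx hax haz
        have he : edge a z := by
          rw [← hα x z a z hax h0]
          exact Or.inr ⟨rfl, fun h => hx ((hzv x).2 h)⟩
        rcases he with ⟨_, h2⟩ | ⟨_, h2⟩
        · exact h2 rfl
        · exact h2 ((hzv a).1 haz)
      · right; right
        refine ⟨b, rfl, hb, ?_⟩
        intro x a hx hax
        have he : edge a b := by
          rw [← hα x z a b hax h0]
          exact Or.inr ⟨rfl, fun h => hx ((hzv x).2 h)⟩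
        rcases he with ⟨h1, _⟩ | ⟨h1, _⟩
        · exact (hzv a).2 h1
        · exact absurd ((hzv b).2 h1) hb
  · rintro (⟨hdom, him⟩ | ⟨h0, hmap⟩ | ⟨b, h0, hbz, hmap⟩) <;> intro u v a c hu hv
    · have hne : ∀ x a : Fin n, α x = some a → x.val ≠ 0 := by
        intro x a hx hx0
        exact hdom (by rw [(hzv x).2 hx0] at hx; simp [pdom, hx])
      have huv : ¬ edge u v := by
        rintro (⟨h1, _⟩ | ⟨h1, _⟩)
        exacts [hne u a hu h1, hne v c hv h1]
      rcases him with him | him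
      · have ha : a ∈ pim α := ⟨u, hu⟩
        have hc : c ∈ pim α := ⟨v, hv⟩
        rw [him] at ha hc
        have ha' : a = z := ha
        have hc' : c = z := hc
        subst ha'; subst hc'
        simp only [huv, false_iff]
        rintro (⟨_, h2⟩ | ⟨_, h2⟩) <;> exact h2 rfl
      · have ha : a ≠ z := him ⟨u, hu⟩
        have hc : c ≠ z := him ⟨v, hv⟩
        simp only [huv, false_iff]
        rintro (⟨h1, _⟩ | ⟨h1, _⟩)
        exacts [ha ((hzv a).2 h1), hc ((hzv c).2 h1)]
    · -- case 2
      by_cases huz : u = z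
      · subst huz
        have ha : a = z := Option.some_inj.mp (hu.symm.trans h0)
        subst ha
        by_cases hvz : v = z
        · subst hvz
          have hc : c = z := Option.some_inj.mp (hv.symm.trans hu)
          subst hc
          constructor <;> rintro (⟨h1, h2⟩ | ⟨h1, h2⟩) <;> exact absurd h1 h2
        · have hc : c ≠ z := hmap v c hvz hv
          have hv0 : v.val ≠ 0 := fun h => hvz ((hzv v).2 h)
          have hc0 : c.val ≠ 0 := fun h => hc ((hzv c).2 h)
          exact iff_of_true (Or.inl ⟨rfl, hv0⟩) (Or.inl ⟨rfl, hc0⟩)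
      · have ha : a ≠ z := hmap u a huz hu
        have hu0 : u.val ≠ 0 := fun h => huz ((hzv u).2 h)
        have ha0 : a.val ≠ 0 := fun h => ha ((hzv a).2 h)
        by_cases hvz : v = z
        · subst hvz
          have hc : c = z := Option.some_inj.mp (hv.symm.trans h0)
          subst hc
          exact iff_of_true (Or.inr ⟨rfl, hu0⟩) (Or.inr ⟨rfl, ha0⟩)
        · have hc : c ≠ z := hmap v c hvz hv
          have hv0 : v.val ≠ 0 := fun h => hvz ((hzv v).2 h)
          have hc0 : c.val ≠ 0 := fun h => hc ((hzv c).2 h)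
          constructor <;> rintro (⟨h1, _⟩ | ⟨h1, _⟩)
          exacts [absurd h1 hu0, absurd h1 hv0, absurd h1 ha0, absurd h1 hc0]
    · -- case 3
      have hb0 : b.val ≠ 0 := fun h => hbz ((hzv b).2 h)
      by_cases huz : u = z
      · subst huz
        have ha : a = b := Option.some_inj.mp (hu.symm.trans h0)
        subst ha
        by_cases hvz : v = z
        · subst hvz
          have hc : c = a := Option.some_inj.mp (hv.symm.trans hu)
          subst hc
          constructor <;> rintro (⟨h1, h2⟩ | ⟨h1, h2⟩) <;> exact absurd h1 h2
        · have hc : c = z := hmap v c hvz hv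
          subst hc
          have hv0 : v.val ≠ 0 := fun h => hvz ((hzv v).2 h)
          exact iff_of_true (Or.inl ⟨rfl, hv0⟩) (Or.inr ⟨rfl, hb0⟩)
      · have ha : a = z := hmap u a huz hu
        subst ha
        have hu0 : u.val ≠ 0 := fun h => huz ((hzv u).2 h)
        by_cases hvz : v = z
        · subst hvz
          have hc : c = b := Option.some_inj.mp (hv.symm.trans h0)
          subst hc
          exact iff_of_true (Or.inr ⟨rfl, hu0⟩) (Or.inl ⟨rfl, hb0⟩)
        · have hc : c = z := hmap v c hvz hv
          subst hc
          have hv0 : v.val ≠ 0 := fun h => hvz ((hzv v).2 h)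
          constructor <;> rintro (⟨h1, h2⟩ | ⟨h1, h2⟩)
          exacts [absurd h1 hu0, absurd h1 hv0, absurd rfl h2, absurd rfl h2]
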